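/- Let α, β be ordinals with α countable and β > α·2. Then Adam has a winning strategy in DG^β_{2^ω,α}(𝕀, ℝ), where 𝕀 = ℝ \ ℚ and ℝ carry their usual linear orders (viewed as disjoint structures). -/

import Mathlib

open Cardinal Set

universe u

namespace DGRel

/- The similarity game `DG^β_{θ,α}` of Väänänen–Veličković, specialised to structures
`(M₀, R₀)`, `(M₁, R₁)` with a single binary relation (this covers in particular linear
orders, with `R = (<)`). -/

variable {M N : Type u} (R0 : M → M → Prop) (R1 : N → N → Prop)

/-- A partial isomorphism between `(M, R0)` and `(N, R1)`, given as the graph of a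
partial map: functional, injective, and preserving the relation in both directions. -/
def IsPartialIso (g : Set (M × N)) : Prop :=
  (∀ ⦃a : M⦄ ⦃b b' : N⦄, (a, b) ∈ g → (a, b') ∈ g → b = b') ∧
  (∀ ⦃a a' : M⦄ ⦃b : N⦄, (a, b) ∈ g → (a', b) ∈ g → a = a') ∧
  (∀ ⦃a a' : M⦄ ⦃b b' : N⦄, (a, b) ∈ g → (a', b') ∈ g → (R0 a a' ↔ R1 b b'))

/-- A `(θ, α)`-position in the similarity game on `(M, N)`:  a clock ordinal `ht`, sets
`A0 ⊆ M`, `A1 ⊆ N` of cardinality `≤ θ`, a partial isomorphism `g` between them, and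
height functions `h0`, `h1` taking values `< α` on `A0`, `A1`, such that every element of
height `0` is matched by `g`. -/
structure Position (R0 : M → M → Prop) (R1 : N → N → Prop)
    (θ : Cardinal.{u}) (α : Ordinal.{u}) : Type (u + 1) where
  ht : Ordinal.{u}
  A0 : Set M
  A1 : Set N
  A0_card : #A0 ≤ θ
  A1_card : #A1 ≤ θ
  g : Set (M × N)
  g_iso : IsPartialIso R0 R1 g
  g_sub : g ⊆ A0 ×ˢ A1
  h0 : M → Ordinal.{u}
  h1 : N → Ordinal.{u}
  h0_lt : ∀ a ∈ A0, h0 a < α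
  h1_lt : ∀ b ∈ A1, h1 b < α
  h0_zero : ∀ a ∈ A0, h0 a = 0 → ∃ b, (a, b) ∈ g
  h1_zero : ∀ b ∈ A1, h1 b = 0 → ∃ a, (a, b) ∈ g

variable {θ : Cardinal.{u}} {α : Ordinal.{u}}

/-- `q` extends `p` (written `q < p` in the paper): the clock strictly decreases, the sets
grow, the partial isomorphism of `q` restricted to the old sets is that of `p`, and every
height strictly decreases unless it is already `0`. -/
def Extends (q p : Position R0 R1 θ α) : Prop :=
  q.ht < p.ht ∧ p.A0 ⊆ q.A0 ∧ p.A1 ⊆ q.A1 ∧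
  p.g ⊆ q.g ∧ (∀ a b, (a, b) ∈ q.g → a ∈ p.A0 → (a, b) ∈ p.g) ∧
  (∀ a ∈ p.A0, q.h0 a ≤ p.h0 a ∧ (p.h0 a ≠ 0 → q.h0 a < p.h0 a)) ∧
  (∀ b ∈ p.A1, q.h1 b ≤ p.h1 b ∧ (p.h1 b ≠ 0 → q.h1 b < p.h1 b))

/-- The starting position `(β, ∅, ∅, ∅, ∅)`. -/
def startPos (β : Ordinal.{u}) : Position R0 R1 θ α where
  ht := β
  A0 := ∅
  A1 := ∅
  A0_card := by simp
  A1_card := by simp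
  g := ∅
  g_iso := by refine ⟨?_, ?_, ?_⟩ <;> intros <;> simp_all
  g_sub := by simp
  h0 := fun _ => 0
  h1 := fun _ => 0
  h0_lt := by simp
  h1_lt := by simp
  h0_zero := by simp
  h1_zero := by simp

/-- Eve has a winning strategy in the similarity game from position `p`:  whatever clock
ordinal `β' < ht p` and sets `B0`, `B1` of size `≤ θ` Adam demands, Eve can move to an
extending position covering them from which she again has a winning strategy.  (Since the
clock strictly decreases, the game is finite, and this well-founded recursion captures
exactly the existence of a winning strategy for Eve.) -/
noncomputable def EveWinsFrom (p : Position R0 R1 θ α) : Prop :=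
  WellFounded.fix (C := fun _ : Ordinal.{u} => Position R0 R1 θ α → Prop) Ordinal.lt_wf
    (fun o IH p =>
      ∀ β' (hβ : β' < o) (B0 : Set M) (B1 : Set N), #B0 ≤ θ → #B1 ≤ θ →
        ∃ q : Position R0 R1 θ α, Extends R0 R1 q p ∧ q.ht = β' ∧
          B0 ⊆ q.A0 ∧ B1 ⊆ q.A1 ∧ IH β' hβ q)
    p.ht p

/-- Eve has a winning strategy in the game `DG^β_{θ,α}((M,R0), (N,R1))`. -/
noncomputable def EveWinsGame (β : Ordinal.{u}) (θ : Cardinal.{u}) (α : Ordinal.{u}) : Prop :=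
  EveWinsFrom R0 R1 (startPos R0 R1 (θ := θ) (α := α) β)

/-- Adam has a winning strategy from position `p`: he can demand a clock ordinal
`β' < ht p` and sets `B0`, `B1` of size `≤ θ` such that every legal reply of Eve leads to
a position from which Adam again has a winning strategy (in particular, if Eve has no
legal reply, she loses). -/
inductive AdamWinsFrom : Position R0 R1 θ α → Prop where
  | step (p : Position R0 R1 θ α) (β' : Ordinal.{u}) (hβ : β' < p.ht)
      (B0 : Set M) (B1 : Set N) (hB0 : #B0 ≤ θ) (hB1 : #B1 ≤ θ)
      (h : ∀ q : Position R0 R1 θ α, Extends R0 R1 q p → q.ht = β' →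
        B0 ⊆ q.A0 → B1 ⊆ q.A1 → AdamWinsFrom q) :
      AdamWinsFrom p

/-- Adam has a winning strategy in the game `DG^β_{θ,α}((M,R0), (N,R1))`. -/
def AdamWinsGame (β : Ordinal.{u}) (θ : Cardinal.{u}) (α : Ordinal.{u}) : Prop :=
  AdamWinsFrom R0 R1 (startPos R0 R1 (θ := θ) (α := α) β)

/-- A position of the infinite game `DG_{θ,α}` (no clock ordinal). -/
structure IPosition (R0 : M → M → Prop) (R1 : N → N → Prop)
    (θ : Cardinal.{u}) (α : Ordinal.{u}) : Type (u + 1) where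
  A0 : Set M
  A1 : Set N
  A0_card : #A0 ≤ θ
  A1_card : #A1 ≤ θ
  g : Set (M × N)
  g_iso : IsPartialIso R0 R1 g
  g_sub : g ⊆ A0 ×ˢ A1
  h0 : M → Ordinal.{u}
  h1 : N → Ordinal.{u}
  h0_lt : ∀ a ∈ A0, h0 a < α
  h1_lt : ∀ b ∈ A1, h1 b < α
  h0_zero : ∀ a ∈ A0, h0 a = 0 → ∃ b, (a, b) ∈ g
  h1_zero : ∀ b ∈ A1, h1 b = 0 → ∃ a, (a, b) ∈ g

/-- Extension of positions in the infinite game. -/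
def IExtends (q p : IPosition R0 R1 θ α) : Prop :=
  p.A0 ⊆ q.A0 ∧ p.A1 ⊆ q.A1 ∧
  p.g ⊆ q.g ∧ (∀ a b, (a, b) ∈ q.g → a ∈ p.A0 → (a, b) ∈ p.g) ∧
  (∀ a ∈ p.A0, q.h0 a ≤ p.h0 a ∧ (p.h0 a ≠ 0 → q.h0 a < p.h0 a)) ∧
  (∀ b ∈ p.A1, q.h1 b ≤ p.h1 b ∧ (p.h1 b ≠ 0 → q.h1 b < p.h1 b))

/-- The empty starting position of the infinite game. -/
def startIPos : IPosition R0 R1 θ α where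
  A0 := ∅
  A1 := ∅
  A0_card := by simp
  A1_card := by simp
  g := ∅
  g_iso := by refine ⟨?_, ?_, ?_⟩ <;> intros <;> simp_all
  g_sub := by simp
  h0 := fun _ => 0
  h1 := fun _ => 0
  h0_lt := by simp
  h1_lt := by simp
  h0_zero := by simp
  h1_zero := by simp

/-- Eve has a winning strategy in the infinite game `DG_{θ,α}` of length `ω`.  Since this
game is closed for Eve, having a winning strategy is equivalent to having a positional
one, i.e. a set `K` of positions containing the starting position such that Eve can
answer any challenge of Adam while staying inside `K`. -/
def EveWinsInfGame (θ : Cardinal.{u}) (α : Ordinal.{u}) : Prop :=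
  ∃ K : Set (IPosition R0 R1 θ α), startIPos R0 R1 ∈ K ∧
    ∀ p ∈ K, ∀ (B0 : Set M) (B1 : Set N), #B0 ≤ θ → #B1 ≤ θ →
      ∃ q ∈ K, IExtends R0 R1 q p ∧ B0 ⊆ q.A0 ∧ B1 ⊆ q.A1

end DGRel

section Aux

open DGRel

local notation "MI" => {x : ℝ // Irrational x}

/-- Countable unions of meagre sets (indexed by a countable set) are meagre. -/
lemma isMeagre_biUnion' {ι : Type*} {T : Set ι} (hT : T.Countable) {f : ι → Set ℝ}
    (h : ∀ i ∈ T, IsMeagre (f i)) : IsMeagre (⋃ i ∈ T, f i) := by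
  rw [IsMeagre, compl_iUnion₂]
  exact (countable_bInter_mem hT).2 h

lemma isMeagre_of_countable {s : Set ℝ} (h : s.Countable) : IsMeagre s := by
  have : s = ⋃ x ∈ s, {x} := by simp
  rw [this]
  refine isMeagre_biUnion' h fun x _ => ?_
  rw [IsMeagre]
  exact residual_of_dense_open isOpen_compl_singleton (dense_compl_singleton x)

lemma irrational_not_meagre : ¬ IsMeagre {x : ℝ | Irrational x} := by
  intro hmeag
  have hq : IsMeagre ({x : ℝ | Irrational x}ᶜ) := by
    apply isMeagre_of_countable
    have : {x : ℝ | Irrational x}ᶜ = Set.range ((↑) : ℚ → ℝ) := by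
      ext x; simp [Irrational]
    rw [this]
    exact Set.countable_range _
  have huniv : IsMeagre (Set.univ : Set ℝ) := by
    have : (Set.univ : Set ℝ) = {x : ℝ | Irrational x} ∪ {x : ℝ | Irrational x}ᶜ := by
      simp
    rw [IsMeagre, compl_univ]
    rw [IsMeagre] at hmeag hq
    simpa using Filter.inter_mem hmeag hq
  rw [IsMeagre, compl_univ] at huniv
  exact (dense_of_mem_residual huniv).nonempty.ne_empty rfl

lemma exists_Ioo_subset_closure {s : Set ℝ} (h : ¬ IsMeagre s) :
    ∃ u v : ℝ, u < v ∧ Set.Ioo u v ⊆ closure s := by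
  have hne : (interior (closure s)).Nonempty := by
    rw [Set.nonempty_iff_ne_empty]
    intro he
    refine h (isMeagre_iff_countable_union_isNowhereDense.2
      ⟨{closure s}, ?_, Set.countable_singleton _, ?_⟩)
    · intro t ht
      rw [Set.mem_singleton_iff] at ht
      subst ht
      rw [IsNowhereDense, closure_closure]
      exact he
    · simpa using subset_closure
  obtain ⟨x, hx⟩ := hne
  obtain ⟨ε, hε, hb⟩ := Metric.isOpen_iff.1 isOpen_interior x hx
  refine ⟨x - ε, x + ε, by linarith, ?_⟩
  rw [← Real.ball_eq_Ioo]
  exact hb.trans interior_subset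

lemma countable_Iio_ordinal {γ : Ordinal.{0}} (h : γ.card ≤ Cardinal.aleph0) :
    (Set.Iio γ).Countable := by
  rw [← Set.countable_coe_iff]
  rw [← Cardinal.mk_le_aleph0_iff, Ordinal.mk_Iio_ordinal]
  calc Cardinal.lift.{1} γ.card ≤ Cardinal.lift.{1} Cardinal.aleph0 := Cardinal.lift_le.2 h
    _ = Cardinal.aleph0 := Cardinal.lift_aleph0

section Game

variable {α : Ordinal.{0}}

local notation "RM" => ((· < ·) : {x : ℝ // Irrational x} → {x : ℝ // Irrational x} → Prop)
local notation "RN" => ((· < ·) : ℝ → ℝ → Prop)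

/-- The key combinatorial contradiction: if `g` is a partial order-isomorphism matching a
set `S` of irrationals which is dense in an interval `(u, v)`, and the supremum of the
images of `S ∩ (u, q)` (for a rational `u < q < v`) has a `g`-preimage, we get a
contradiction. -/
lemma contra_lemma {g : Set (MI × ℝ)} (hg : IsPartialIso RM RN g)
    {S : Set MI} {m : MI → ℝ} (hm : ∀ a ∈ S, (a, m a) ∈ g)
    {u v : ℝ} {q : ℚ} (huq : u < (q : ℝ)) (hqv : (q : ℝ) < v)
    (hdense : Set.Ioo u v ⊆ closure (Subtype.val '' S))
    {x : MI} (hx : (x, sSup (m '' {a | a ∈ S ∧ (a : ℝ) ∈ Set.Ioo u (q : ℝ)})) ∈ g) :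
    False := by
  set L : Set MI := {a | a ∈ S ∧ (a : ℝ) ∈ Set.Ioo u (q : ℝ)} with hL
  set s : ℝ := sSup (m '' L) with hs
  -- picking elements of S in subintervals of (u, v)
  have pick : ∀ x' y' : ℝ, u ≤ x' → x' < y' → y' ≤ v → ∃ a, a ∈ S ∧ (a : ℝ) ∈ Set.Ioo x' y' := by
    intro x' y' hux hxy hyv
    obtain ⟨z, hz1, hz2⟩ := exists_between hxy
    have hzc : z ∈ closure (Subtype.val '' S) :=
      hdense ⟨lt_of_le_of_lt hux hz1, lt_of_lt_of_le hz2 hyv⟩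
    rw [mem_closure_iff] at hzc
    obtain ⟨w, hwIoo, hwS⟩ := hzc (Set.Ioo x' y') isOpen_Ioo ⟨hz1, hz2⟩
    obtain ⟨a, haS, rfl⟩ := hwS
    exact ⟨a, haS, hwIoo⟩
  -- the relation transfer
  have iso := hg.2.2
  have hcoe : ∀ a b : MI, (a < b) ↔ ((a : ℝ) < (b : ℝ)) := fun a b => Subtype.coe_lt_coe.symm
  -- L is nonempty
  obtain ⟨a₀, ha₀S, ha₀⟩ := pick u q le_rfl huq (le_of_lt hqv)
  have ha₀L : a₀ ∈ L := ⟨ha₀S, ha₀⟩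
  -- bound above
  obtain ⟨n₀, hn₀S, hn₀⟩ := pick (q : ℝ) v (le_of_lt huq) hqv le_rfl
  have hbdd : BddAbove (m '' L) := by
    refine ⟨m n₀, ?_⟩
    rintro y ⟨a, haL, rfl⟩
    have halt : a < n₀ := (hcoe a n₀).2 (lt_trans haL.2.2 hn₀.1)
    exact le_of_lt ((iso (hm a haL.1) (hm n₀ hn₀S)).1 halt)
  have hLne : (m '' L).Nonempty := ⟨m a₀, a₀, ha₀L, rfl⟩
  -- every element of L has image strictly below s
  have hlt_s : ∀ a, a ∈ L → m a < s := by
    intro a haL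
    obtain ⟨a', ha'S, ha'⟩ := pick (a : ℝ) q (le_of_lt haL.2.1) haL.2.2 (le_of_lt hqv)
    have ha'L : a' ∈ L := ⟨ha'S, lt_trans haL.2.1 ha'.1, ha'.2⟩
    have : m a < m a' :=
      (iso (hm a haL.1) (hm a' ha'S)).1 ((hcoe a a').2 ha'.1)
    exact lt_of_lt_of_le this (le_csSup hbdd ⟨a', ha'L, rfl⟩)
  -- hence every element of L is strictly below x
  have hlt_x : ∀ a, a ∈ L → (a : ℝ) < (x : ℝ) := by
    intro a haL
    exact (hcoe a x).1 ((iso (hm a haL.1) hx).2 (hlt_s a haL))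
  -- x is at least q
  have hqx : (q : ℝ) ≤ (x : ℝ) := by
    by_contra hlt
    push_neg at hlt
    have hux : u < (x : ℝ) := lt_trans ha₀.1 (hlt_x a₀ ha₀L)
    obtain ⟨a, haS, ha⟩ := pick (x : ℝ) q (le_of_lt hux) hlt (le_of_lt hqv)
    have haL : a ∈ L := ⟨haS, lt_trans hux ha.1, ha.2⟩
    exact absurd (hlt_x a haL) (not_lt.2 (le_of_lt ha.1))
  have hqx' : (q : ℝ) < (x : ℝ) := lt_of_le_of_ne hqx (Ne.symm (x.2.ne_rat q))
  -- pick n ∈ S with q < n < x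
  obtain ⟨n, hnS, hn⟩ := pick (q : ℝ) (min (x : ℝ) v) (le_of_lt huq)
    (lt_min hqx' hqv) (min_le_right _ _)
  have hnx : (n : ℝ) < (x : ℝ) := lt_of_lt_of_le hn.2 (min_le_left _ _)
  -- m n is an upper bound of m '' L, so s ≤ m n
  have hub : s ≤ m n := by
    refine csSup_le hLne ?_
    rintro y ⟨a, haL, rfl⟩
    exact le_of_lt ((iso (hm a haL.1) (hm n hnS)).1 ((hcoe a n).2 (lt_trans haL.2.2 hn.1)))
  -- but n < x gives m n < s
  have : m n < s := (iso (hm n hnS) hx).1 ((hcoe n x).2 hnx)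
  exact absurd hub (not_le.2 this)

/-- Phase 2 of Adam's strategy: keep demanding nothing while the height of the critical
supremum decreases to `0`. -/
lemma phase2 (S : Set MI) (m : MI → ℝ) (u v : ℝ) (q : ℚ)
    (huq : u < (q : ℝ)) (hqv : (q : ℝ) < v)
    (hdense : Set.Ioo u v ⊆ closure (Subtype.val '' S)) :
    ∀ δ : Ordinal.{0}, ∀ p : Position RM RN Cardinal.continuum α,
      (∀ a ∈ S, (a, m a) ∈ p.g) →
      sSup (m '' {a | a ∈ S ∧ (a : ℝ) ∈ Set.Ioo u (q : ℝ)}) ∈ p.A1 →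
      p.h1 (sSup (m '' {a | a ∈ S ∧ (a : ℝ) ∈ Set.Ioo u (q : ℝ)})) = δ →
      δ < p.ht → AdamWinsFrom RM RN p := by
  intro δ
  induction δ using Ordinal.induction with
  | _ δ IH =>
    intro p hm hsA1 hδ hht
    set s : ℝ := sSup (m '' {a | a ∈ S ∧ (a : ℝ) ∈ Set.Ioo u (q : ℝ)}) with hsdef
    by_cases h0 : δ = 0
    · subst h0
      obtain ⟨x, hx⟩ := p.h1_zero s hsA1 hδ
      exact absurd hx (fun hx => contra_lemma p.g_iso hm huq hqv hdense hx)
    · refine AdamWinsFrom.step p δ hht ∅ ∅ (by simp) (by simp) ?_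
      intro qp hext hqht _ _
      have hsA1' : s ∈ qp.A1 := hext.2.2.1 hsA1
      have hm' : ∀ a ∈ S, (a, m a) ∈ qp.g := fun a ha => hext.2.2.2.1 (hm a ha)
      have hlt : qp.h1 s < δ := by
        have := (hext.2.2.2.2.2.2 s hsA1).2 (by rw [hδ]; exact h0)
        rwa [hδ] at this
      exact IH (qp.h1 s) hlt qp hm' hsA1' rfl (by rw [hqht]; exact hlt)

/-- Phase 1 of Adam's strategy: drive the heights of a non-meagre set of irrationals
down to `0`. -/
lemma phase1 (hα : α.card ≤ Cardinal.aleph0) :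
    ∀ γ : Ordinal.{0}, γ < α → ∀ p : Position RM RN Cardinal.continuum α, ∀ S : Set MI,
      ¬ IsMeagre (Subtype.val '' S) → S ⊆ p.A0 → (∀ a ∈ S, p.h0 a ≤ γ) →
      (∀ b : ℝ, b ∈ p.A1) → α + γ < p.ht → AdamWinsFrom RM RN p := by
  intro γ
  induction γ using Ordinal.induction with
  | _ γ IH =>
    intro hγα p S hNM hSA0 hSh hA1 hclock
    by_cases h0 : γ = 0
    · -- every element of S is matched; move to phase 2
      subst h0
      have hmatched : ∀ a ∈ S, ∃ b, (a, b) ∈ p.g := fun a ha =>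
        p.h0_zero a (hSA0 ha) (nonpos_iff_eq_zero.1 (hSh a ha))
      classical
      set m : MI → ℝ := fun a => if h : ∃ b, (a, b) ∈ p.g then h.choose else 0 with hmdef
      have hm : ∀ a ∈ S, (a, m a) ∈ p.g := by
        intro a ha
        have h := hmatched a ha
        simp only [hmdef, dif_pos h]
        exact h.choose_spec
      obtain ⟨u, v, huv, hdense⟩ := exists_Ioo_subset_closure hNM
      obtain ⟨q, huq, hqv⟩ := exists_rat_btwn huv
      set sexp : ℝ := sSup (m '' {a | a ∈ S ∧ (a : ℝ) ∈ Set.Ioo u (q : ℝ)}) with hsexp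
      refine phase2 S m u v q huq hqv hdense (p.h1 sexp) p hm (hA1 sexp) rfl ?_
      have h1 : p.h1 sexp < α := p.h1_lt sexp (hA1 sexp)
      have h2 : α < p.ht := by simpa using hclock
      exact lt_trans h1 h2
    · -- make all heights on S decrease, and find a new non-meagre level set
      refine AdamWinsFrom.step p (α + γ) hclock ∅ ∅ (by simp) (by simp) ?_
      intro qp hext hqht _ _
      have hdec : ∀ a ∈ S, qp.h0 a < γ := by
        intro a ha
        have h := hext.2.2.2.2.2.1 a (hSA0 ha)
        by_cases hz : p.h0 a = 0
        · have : qp.h0 a ≤ 0 := by rw [← hz]; exact h.1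
          rw [nonpos_iff_eq_zero.1 this]
          exact pos_iff_ne_zero.2 h0
        · exact lt_of_lt_of_le (h.2 hz) (hSh a ha)
      -- find a non-meagre level set
      have hcover : Subtype.val '' S ⊆
          ⋃ γ' ∈ Set.Iio γ, Subtype.val '' {a | a ∈ S ∧ qp.h0 a = γ'} := by
        rintro _ ⟨a, haS, rfl⟩
        exact Set.mem_biUnion (hdec a haS) ⟨a, ⟨haS, rfl⟩, rfl⟩
      have hcnt : (Set.Iio γ).Countable :=
        countable_Iio_ordinal (le_trans (Ordinal.card_le_card (le_of_lt hγα)) hα)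
      have hex : ∃ γ' ∈ Set.Iio γ, ¬ IsMeagre (Subtype.val '' {a | a ∈ S ∧ qp.h0 a = γ'}) := by
        by_contra hall
        push_neg at hall
        exact hNM ((isMeagre_biUnion' hcnt hall).mono hcover)
      obtain ⟨γ', hγ', hNM'⟩ := hex
      refine IH γ' hγ' (lt_trans hγ' hγα) qp _ hNM'
        (fun a ha => hext.2.1 (hSA0 ha.1)) (fun a ha => le_of_eq ha.2)
        (fun b => hext.2.2.1 (hA1 b)) ?_
      rw [hqht]
      exact (add_lt_add_iff_left α).2 hγ'

end Game

end Aux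


open DGRel in
/-- Let `α`, `β` be ordinals with `α` countable and `β > α·2`.  Then
Adam has a winning strategy in `DG^β_{2^ω,α}(𝕀, ℝ)`, where `𝕀 = ℝ \ ℚ` is the linear
order of the irrationals. -/
theorem adam_wins_irrationals_vs_reals (α β : Ordinal.{0})
    (hα : α.card ≤ Cardinal.aleph0) (hβ : α * 2 < β) :
    AdamWinsGame ((· < ·) : {x : ℝ // Irrational x} → {x : ℝ // Irrational x} → Prop)
      ((· < ·) : ℝ → ℝ → Prop) β Cardinal.continuum α := by
  refine AdamWinsFrom.step _ (α * 2) hβ Set.univ Set.univ ?_ ?_ ?_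
  · rw [Cardinal.mk_univ, ← Cardinal.mk_real]
    exact Cardinal.mk_subtype_le _
  · rw [Cardinal.mk_univ, Cardinal.mk_real]
  intro qp hext hqht hB0 hB1
  have hA0 : ∀ a : {x : ℝ // Irrational x}, a ∈ qp.A0 := fun a => hB0 (Set.mem_univ a)
  have hA1 : ∀ b : ℝ, b ∈ qp.A1 := fun b => hB1 (Set.mem_univ b)
  have hcover : Subtype.val '' (Set.univ : Set {x : ℝ // Irrational x}) ⊆
      ⋃ γ ∈ Set.Iio α, Subtype.val '' {a | a ∈ (Set.univ : Set {x : ℝ // Irrational x}) ∧ qp.h0 a = γ} := by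
    rintro _ ⟨a, -, rfl⟩
    exact Set.mem_biUnion (qp.h0_lt a (hA0 a)) ⟨a, ⟨Set.mem_univ a, rfl⟩, rfl⟩
  have hNMuniv : ¬ IsMeagre (Subtype.val '' (Set.univ : Set {x : ℝ // Irrational x})) := by
    rw [Set.image_univ, Subtype.range_val_subtype]
    exact irrational_not_meagre
  have hex : ∃ γ ∈ Set.Iio α,
      ¬ IsMeagre (Subtype.val '' {a | a ∈ (Set.univ : Set {x : ℝ // Irrational x}) ∧ qp.h0 a = γ}) := by
    by_contra hall
    push_neg at hall
    exact hNMuniv ((isMeagre_biUnion' (countable_Iio_ordinal hα) hall).mono hcover)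
  obtain ⟨γ, hγα, hNM⟩ := hex
  refine phase1 hα γ hγα qp _ hNM (fun a _ => hA0 a) (fun a ha => le_of_eq ha.2) hA1 ?_
  rw [hqht]
  have h2 : α * 2 = α + α := by
    rw [show (2 : Ordinal.{0}) = 1 + 1 by norm_num, mul_add, mul_one]
  rw [h2]
  exact (add_lt_add_iff_left α).2 hγα
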